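/- The collection of closed patterns is the unique smallest subcollection S of a finite pattern collection P such that the max-estimation is exact: for an anti-monotone interestingness measure φ, φ(p) = max{φ(p') : p ⪯ p', p' ∈ S} holds for all p ∈ P if and only if S contains all closed patterns of P, and it holds when S equals the set of closed patterns. -/

import Mathlib

/-- Key lemma: every pattern has a closed pattern above it with the same value. -/
lemma exists_closed_above {P : Type*} [Fintype P] [PartialOrder P] (φ : P → ℝ)
    (hanti : ∀ p p' : P, p ≤ p' → φ p' ≤ φ p) (p : P) :
    ∃ q, (∀ p', q < p' → φ p' < φ q) ∧ p ≤ q ∧ φ q = φ p := by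
  have hfin : ({q : P | p ≤ q ∧ φ q = φ p}).Finite := Set.toFinite _
  obtain ⟨q, hq, hmax⟩ := Set.Finite.exists_maximalFor id _ hfin ⟨p, le_refl p, rfl⟩
  refine ⟨q, ?_, hq.1, hq.2⟩
  intro p' hlt
  have hle : φ p' ≤ φ q := hanti _ _ hlt.le
  rcases lt_or_eq_of_le hle with h | h
  · exact h
  · exfalso
    have : q = p' := le_antisymm hlt.le (hmax ⟨hq.1.trans hlt.le, by rw [h, hq.2]⟩ hlt.le)
    exact hlt.ne this

/-- The collection of closed patterns is the unique smallest subcollection `S`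
of a finite pattern collection for which the max-estimation of an
anti-monotone interestingness measure `φ` is exact: the estimation from `S`
is exact for all patterns iff `S` contains all closed patterns, and it is
exact when `S` is exactly the set of closed patterns. -/
theorem closed_patterns_smallest_exact
    {P : Type*} [Fintype P] [PartialOrder P] (φ : P → ℝ)
    (hrange : ∀ p, φ p ∈ Set.Icc (0:ℝ) 1)
    (hanti : ∀ p p' : P, p ≤ p' → φ p' ≤ φ p)
    (S : Set P) :
    ((∀ p : P, ∃ q ∈ S, p ≤ q ∧ φ q = φ p ∧ ∀ q' ∈ S, p ≤ q' → φ q' ≤ φ p) ↔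
      {p : P | ∀ p', p < p' → φ p' < φ p} ⊆ S) ∧
    (∀ p : P, ∃ q ∈ {p : P | ∀ p', p < p' → φ p' < φ p},
      p ≤ q ∧ φ q = φ p ∧
        ∀ q' ∈ {p : P | ∀ p', p < p' → φ p' < φ p}, p ≤ q' → φ q' ≤ φ p) := by
  constructor
  · constructor
    · intro hex p hp
      obtain ⟨q, hqS, hpq, hφ, _⟩ := hex p
      rcases eq_or_lt_of_le hpq with h | h
      · rwa [h]
      · exact absurd hφ (ne_of_lt (hp q h))
    · intro hsub p
      obtain ⟨q, hqc, hpq, hφ⟩ := exists_closed_above φ hanti p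
      exact ⟨q, hsub hqc, hpq, hφ, fun q' _ hpq' => hanti _ _ hpq'⟩
  · intro p
    obtain ⟨q, hqc, hpq, hφ⟩ := exists_closed_above φ hanti p
    exact ⟨q, hqc, hpq, hφ, fun q' _ hpq' => hanti _ _ hpq'⟩
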